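/- For P(X,Y) = Y − φ₅(X) where φ₅(X) = 1 + X + X² + X³ + X⁴ is the fifth cyclotomic polynomial, the function V(x,y) = D(x) − (1/5) D(x⁵) on C = {(x, φ₅(x)) : x ∈ ℂ*, φ₅(x) ≠ 0} satisfies dV = η|_C. Hence P is exact. -/

import Mathlib

/-- `η = log|y| d(arg x) − log|x| d(arg y)` as a continuous `ℝ`-linear functional. -/
noncomputable def etaL (p : ℂ × ℂ) : (ℂ × ℂ) →L[ℝ] ℝ :=
  Real.log (‖p.2‖) •
      (Complex.imCLM.comp ((p.1⁻¹ • ContinuousLinearMap.fst ℂ ℂ ℂ).restrictScalars ℝ)) -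
    Real.log (‖p.1‖) •
      (Complex.imCLM.comp ((p.2⁻¹ • ContinuousLinearMap.snd ℂ ℂ ℂ).restrictScalars ℝ))

/-- The differential of the Bloch–Wigner dilogarithm:
`dD(z)(w) = log|z|·Im(−w/(1−z)) − log|1−z|·Im(w/z)`. -/
noncomputable def dBW (z : ℂ) : ℂ →L[ℝ] ℝ :=
  Real.log ‖z‖ •
      (Complex.imCLM.comp (((-(1 - z)⁻¹) • ContinuousLinearMap.id ℂ ℂ).restrictScalars ℝ)) -
    Real.log ‖1 - z‖ •
      (Complex.imCLM.comp ((z⁻¹ • ContinuousLinearMap.id ℂ ℂ).restrictScalars ℝ))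

set_option maxHeartbeats 1600000 in
/-- For `P = Y − φ₅(X)` with `φ₅(X) = 1 + X + X² + X³ + X⁴`: the function
`V(x,y) = D(x) − (1/5)D(x⁵)` satisfies `dV = η|_C` on the curve `y = φ₅(x)`,
where the tangent map of the parametrization `x ↦ (x, φ₅(x))` is `u ↦ (u, φ₅'(x)·u)`.
Hence `P` is exact. -/
theorem cyclotomic_curve_exact
    (D : ℂ → ℝ) (hD : ∀ z : ℂ, z ≠ 0 → z ≠ 1 → HasFDerivAt D (dBW z) z) :
    (∀ x : ℂ, x ≠ 0 → x ≠ 1 → 1 + x + x ^ 2 + x ^ 3 + x ^ 4 ≠ 0 →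
      HasFDerivAt (fun w : ℂ => D w - (1 / 5) * D (w ^ 5))
        ((etaL (x, 1 + x + x ^ 2 + x ^ 3 + x ^ 4)).comp
          (((ContinuousLinearMap.id ℂ ℂ).prod
              ((1 + 2 * x + 3 * x ^ 2 + 4 * x ^ 3) • ContinuousLinearMap.id ℂ ℂ)).restrictScalars ℝ)) x) ∧
    (∃ V : ℂ × ℂ → ℝ,
      ∀ z ∈ {w : ℂ × ℂ | w.1 ≠ 0 ∧ w.2 ≠ 0 ∧ w.2 = 1 + w.1 + w.1 ^ 2 + w.1 ^ 3 + w.1 ^ 4},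
        HasFDerivWithinAt V (etaL z)
          {w : ℂ × ℂ | w.1 ≠ 0 ∧ w.2 ≠ 0 ∧ w.2 = 1 + w.1 + w.1 ^ 2 + w.1 ^ 3 + w.1 ^ 4} z) := by
  constructor
  · intro x hx0 hx1 hφ
    set y : ℂ := 1 + x + x ^ 2 + x ^ 3 + x ^ 4 with hy
    have hx1' : (1:ℂ) - x ≠ 0 := sub_ne_zero.mpr (Ne.symm hx1)
    have h15 : (1:ℂ) - x^5 ≠ 0 := by
      have h : (1:ℂ) - x^5 = (1-x)*y := by rw [hy]; ring
      rw [h]; exact mul_ne_zero hx1' hφ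
    have hx50 : x^5 ≠ 0 := pow_ne_zero _ hx0
    have hx51 : x^5 ≠ 1 := by intro h; apply h15; rw [h]; ring
    have h1 := hD x hx0 hx1
    have h2 := hD (x^5) hx50 hx51
    have h3 : HasFDerivAt (fun w : ℂ => w^5)
        ((ContinuousLinearMap.smulRight (1 : ℂ →L[ℂ] ℂ) ((5:ℂ) * x ^ 4)).restrictScalars ℝ) x := by
      have := (hasDerivAt_pow 5 x).hasFDerivAt
      norm_num at this ⊢
      exact this.restrictScalars ℝ
    have hcomp : HasFDerivAt (fun w : ℂ => D (w^5))
        ((dBW (x^5)).comp ((ContinuousLinearMap.smulRight (1 : ℂ →L[ℂ] ℂ) ((5:ℂ) * x ^ 4)).restrictScalars ℝ)) x :=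
      h2.comp x h3
    have hbig := h1.sub (hcomp.const_mul (1/5 : ℝ))
    refine hbig.congr_fderiv ?_
    ext u
    simp only [dBW, etaL, ContinuousLinearMap.coe_comp', ContinuousLinearMap.coe_sub',
      ContinuousLinearMap.coe_smul', Function.comp_apply, Pi.sub_apply, Pi.smul_apply,
      ContinuousLinearMap.coe_restrictScalars', ContinuousLinearMap.smulRight_apply,
      ContinuousLinearMap.one_apply, ContinuousLinearMap.prod_apply, ContinuousLinearMap.coe_id',
      id_eq, Complex.imCLM_apply, smul_eq_mul, ContinuousLinearMap.coe_fst',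
      ContinuousLinearMap.coe_snd', ContinuousLinearMap.sub_apply, ContinuousLinearMap.smul_apply,
      ContinuousLinearMap.comp_apply]
    have labs5 : Real.log (‖x ^ 5‖) = 5 * Real.log (‖x‖) := by
      rw [norm_pow, Real.log_pow]; norm_num
    have labs : Real.log (‖1 - x ^ 5‖) =
        Real.log (‖1 - x‖) + Real.log (‖y‖) := by
      rw [show (1:ℂ) - x ^ 5 = (1 - x) * y from by rw [hy]; ring, norm_mul,
        Real.log_mul (norm_ne_zero_iff.mpr hx1') (norm_ne_zero_iff.mpr hφ)]
    have i1 : ((x ^ 5)⁻¹ * (u * (5 * x ^ 4))).im = 5 * (x⁻¹ * u).im := by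
      rw [show (x ^ 5)⁻¹ * (u * (5 * x ^ 4)) = ((5:ℝ):ℂ) * (x⁻¹ * u) from by
        push_cast; field_simp]
      simp
    have i2 : (-(1 - x ^ 5)⁻¹ * (u * (5 * x ^ 4))).im =
        (-(1 - x)⁻¹ * u).im + (y⁻¹ * ((1 + 2 * x + 3 * x ^ 2 + 4 * x ^ 3) * u)).im := by
      rw [show -(1 - x ^ 5)⁻¹ * (u * (5 * x ^ 4)) =
        -(1 - x)⁻¹ * u + y⁻¹ * ((1 + 2 * x + 3 * x ^ 2 + 4 * x ^ 3) * u) from by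
        rw [show (1:ℂ) - x ^ 5 = (1 - x) * y from by rw [hy]; ring]
        field_simp
        ring, Complex.add_im]
    rw [labs5, labs, i1, i2]
    ring
  · set ζ : ℂ := Complex.exp (2 * Real.pi * Complex.I / 5) with hζdef
    have hζ0 : ζ ≠ 0 := Complex.exp_ne_zero _
    have hζ5 : ζ ^ 5 = 1 := by
      rw [hζdef, ← Complex.exp_nat_mul]
      rw [show (5:ℕ) * (2 * (Real.pi:ℂ) * Complex.I / 5) = 2 * Real.pi * Complex.I by push_cast; ring]
      exact Complex.exp_two_pi_mul_I
    have hζ1 : ζ ≠ 1 := by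
      rw [hζdef]
      intro h
      rw [Complex.exp_eq_one_iff] at h
      obtain ⟨n, hn⟩ := h
      have hπ : (2 * (Real.pi:ℂ) * Complex.I) ≠ 0 := by
        simp [Real.pi_ne_zero, Complex.I_ne_zero]
      have h2 : (1:ℂ) * (2 * (Real.pi:ℂ) * Complex.I) = ((n:ℂ) * 5) * (2 * (Real.pi:ℂ) * Complex.I) := by
        linear_combination 5 * hn
      have h3 : (1:ℂ) = (n:ℂ) * 5 := mul_right_cancel₀ hπ h2
      have h4 : (1:ℤ) = n * 5 := by exact_mod_cast h3
      omega
    have habsζ : ‖ζ‖ = 1 := by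
      rw [hζdef, Complex.norm_exp]
      norm_num [Complex.div_re]
    have hφζ : 1 + ζ + ζ^2 + ζ^3 + ζ^4 = 0 := by
      have h : (ζ - 1) * (1 + ζ + ζ^2 + ζ^3 + ζ^4) = 0 := by linear_combination hζ5
      rcases mul_eq_zero.mp h with h' | h'
      · exact absurd (sub_eq_zero.mp h') hζ1
      · exact h'
    have hprod : ∀ x : ℂ, (1-ζ*x)*(1-ζ^2*x)*(1-ζ^3*x)*(1-ζ^4*x) = 1+x+x^2+x^3+x^4 := by
      intro x
      linear_combination (-x - x^2 + x^2*ζ + x^2*ζ^3 - x^3 + x^3*ζ - x^3*ζ^5 - x^4 + x^4*ζ - x^4*ζ^5 + x^4*ζ^6) * hφζ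
    have hsum' : ∀ x : ℂ, ζ*(1-ζ^2*x)*(1-ζ^3*x)*(1-ζ^4*x) + ζ^2*(1-ζ*x)*(1-ζ^3*x)*(1-ζ^4*x)
        + ζ^3*(1-ζ*x)*(1-ζ^2*x)*(1-ζ^4*x) + ζ^4*(1-ζ*x)*(1-ζ^2*x)*(1-ζ^3*x) = -(1+2*x+3*x^2+4*x^3) := by
      intro x
      linear_combination (1 + 2*x - 2*x*ζ - 2*x*ζ^3 + 3*x^2 - 3*x^2*ζ + 3*x^2*ζ^5 + 4*x^3 - 4*x^3*ζ + 4*x^3*ζ^5 - 4*x^3*ζ^6) * hφζ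
    set S := {w : ℂ × ℂ | w.1 ≠ 0 ∧ w.2 ≠ 0 ∧ w.2 = 1 + w.1 + w.1 ^ 2 + w.1 ^ 3 + w.1 ^ 4} with hS
    refine ⟨fun w => -(D (ζ * w.1) + (D (ζ^2 * w.1) + (D (ζ^3 * w.1) + D (ζ^4 * w.1)))), ?_⟩
    rintro ⟨x, y⟩ ⟨hx0, hy0, hyx⟩
    simp only at hx0 hy0 hyx
    have hyprod : y = (1-ζ*x)*(1-ζ^2*x)*(1-ζ^3*x)*(1-ζ^4*x) := by rw [hyx, hprod]
    have hf1 : 1 - ζ*x ≠ 0 := by intro h; apply hy0; rw [hyprod, h]; ring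
    have hf2 : 1 - ζ^2*x ≠ 0 := by intro h; apply hy0; rw [hyprod, h]; ring
    have hf3 : 1 - ζ^3*x ≠ 0 := by intro h; apply hy0; rw [hyprod, h]; ring
    have hf4 : 1 - ζ^4*x ≠ 0 := by intro h; apply hy0; rw [hyprod, h]; ring
    have hd : ∀ c : ℂ, c*x ≠ 0 → c*x ≠ 1 →
        HasFDerivAt (fun (w : ℂ × ℂ) => D (c * w.1))
          ((dBW (c*x)).comp (c • ContinuousLinearMap.fst ℝ ℂ ℂ)) (x, y) := by
      intro c hc0 hc1
      have hl : HasFDerivAt (fun (w : ℂ × ℂ) => c * w.1) (c • ContinuousLinearMap.fst ℝ ℂ ℂ) (x, y) :=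
        (hasFDerivAt_fst).const_mul c
      exact (hD (c*x) hc0 hc1).comp (x,y) hl
    have hne1 : ∀ c : ℂ, 1 - c*x ≠ 0 → c*x ≠ 1 := fun c h hcon => h (by rw [hcon]; ring)
    have hd1 := hd ζ (mul_ne_zero hζ0 hx0) (hne1 _ hf1)
    have hd2 := hd (ζ^2) (mul_ne_zero (pow_ne_zero _ hζ0) hx0) (hne1 _ hf2)
    have hd3 := hd (ζ^3) (mul_ne_zero (pow_ne_zero _ hζ0) hx0) (hne1 _ hf3)
    have hd4 := hd (ζ^4) (mul_ne_zero (pow_ne_zero _ hζ0) hx0) (hne1 _ hf4)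
    set L1 := Real.log (‖x‖) with hL1
    have hpoly : HasDerivAt (fun q : ℂ => 1+q+q^2+q^3+q^4) (1+2*x+3*x^2+4*x^3) x := by
      have h := ((((hasDerivAt_id x).const_add 1).add (hasDerivAt_pow 2 x)).add
        (hasDerivAt_pow 3 x)).add (hasDerivAt_pow 4 x)
      exact h.congr_deriv (by norm_num)
    have hinner : HasFDerivAt (fun (w : ℂ × ℂ) => w.2 - (1+w.1+w.1^2+w.1^3+w.1^4))
        (ContinuousLinearMap.snd ℂ ℂ ℂ - (1+2*x+3*x^2+4*x^3) • ContinuousLinearMap.fst ℂ ℂ ℂ) (x,y) :=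
      (hasFDerivAt_snd).sub (by have := hpoly.comp_hasFDerivAt (x,y) (hasFDerivAt_fst (p := (x,y)) (𝕜 := ℂ) (E := ℂ) (F := ℂ)); exact this)
    have hm := hinner.const_mul (y⁻¹)
    have him := (Complex.imCLM.hasFDerivAt).comp (x,y) (hm.restrictScalars ℝ)
    have hc := him.const_mul (-L1)
    have hW := ((hd1.add (hd2.add (hd3.add hd4))).neg).add hc
    have hWd := hW.congr_fderiv (g' := etaL (x,y)) ?eq
    case eq =>
      ext u
      all_goals simp only [dBW, etaL, ContinuousLinearMap.coe_comp', ContinuousLinearMap.coe_sub',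
        ContinuousLinearMap.coe_smul', Function.comp_apply, Pi.sub_apply, Pi.smul_apply,
        ContinuousLinearMap.coe_restrictScalars', ContinuousLinearMap.add_apply,
        ContinuousLinearMap.neg_apply, ContinuousLinearMap.coe_id',
        id_eq, Complex.imCLM_apply, smul_eq_mul, ContinuousLinearMap.coe_fst',
        ContinuousLinearMap.coe_snd', ContinuousLinearMap.sub_apply, ContinuousLinearMap.smul_apply,
        ContinuousLinearMap.comp_apply, ContinuousLinearMap.inl_apply,
        ContinuousLinearMap.inr_apply, mul_zero, zero_mul, sub_zero, zero_sub, neg_zero,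
        Complex.zero_im, add_zero, zero_add]
      · -- the (u, 0) component
        have labs1 : Real.log (‖ζ * x‖) = L1 := by
          rw [norm_mul, habsζ, one_mul]
        have labsi : ∀ n : ℕ, Real.log (‖ζ ^ n * x‖) = L1 := by
          intro n; rw [norm_mul, norm_pow, habsζ, one_pow, one_mul]
        have hJ : ∀ c : ℂ, c ≠ 0 → ((c * x)⁻¹ * (c * u)).im = (x⁻¹ * u).im := by
          intro c hc
          congr 1
          field_simp
        have hlog : Real.log (‖1-ζ*x‖) + Real.log (‖1-ζ^2*x‖)
            + Real.log (‖1-ζ^3*x‖) + Real.log (‖1-ζ^4*x‖)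
            = Real.log (‖y‖) := by
          rw [hyprod, norm_mul, norm_mul, norm_mul,
            Real.log_mul (mul_ne_zero (mul_ne_zero (norm_ne_zero_iff.mpr hf1) (norm_ne_zero_iff.mpr hf2)) (norm_ne_zero_iff.mpr hf3)) (norm_ne_zero_iff.mpr hf4),
            Real.log_mul (mul_ne_zero (norm_ne_zero_iff.mpr hf1) (norm_ne_zero_iff.mpr hf2)) (norm_ne_zero_iff.mpr hf3),
            Real.log_mul (norm_ne_zero_iff.mpr hf1) (norm_ne_zero_iff.mpr hf2)]
        have hkeyC : -(1-ζ*x)⁻¹*ζ + -(1-ζ^2*x)⁻¹*ζ^2 + -(1-ζ^3*x)⁻¹*ζ^3 + -(1-ζ^4*x)⁻¹*ζ^4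
            = y⁻¹*(1+2*x+3*x^2+4*x^3) := by
          apply mul_left_cancel₀ hy0
          rw [mul_inv_cancel_left₀ hy0]
          conv_lhs => rw [hyprod]
          field_simp
          linear_combination -hsum' x
        have hkeyIm : (-(1-ζ*x)⁻¹*(ζ*u)).im + (-(1-ζ^2*x)⁻¹*(ζ^2*u)).im
            + (-(1-ζ^3*x)⁻¹*(ζ^3*u)).im + (-(1-ζ^4*x)⁻¹*(ζ^4*u)).im
            = (y⁻¹*((1+2*x+3*x^2+4*x^3)*u)).im := by
          rw [← Complex.add_im, ← Complex.add_im, ← Complex.add_im]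
          congr 1
          linear_combination u * hkeyC
        have hneg : (y⁻¹ * -((1+2*x+3*x^2+4*x^3)*u)).im
            = -(y⁻¹*((1+2*x+3*x^2+4*x^3)*u)).im := by
          rw [show y⁻¹ * -((1+2*x+3*x^2+4*x^3)*u) = -(y⁻¹*((1+2*x+3*x^2+4*x^3)*u)) from by ring,
            Complex.neg_im]
        rw [labs1, labsi 2, labsi 3, labsi 4, hJ ζ hζ0, hJ (ζ^2) (pow_ne_zero _ hζ0),
          hJ (ζ^3) (pow_ne_zero _ hζ0), hJ (ζ^4) (pow_ne_zero _ hζ0), hneg]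
        linear_combination (-L1) * hkeyIm + ((x⁻¹ * u).im) * hlog
      · -- the (0, u) component
        rw [← hL1]
        ring
    refine hWd.hasFDerivWithinAt.congr ?_ ?_
    · intro w hw
      obtain ⟨hw1, hw2, hw3⟩ := hw
      simp only [Function.comp_apply, Function.comp, Pi.add_apply, Pi.neg_apply]
      rw [← hw3]
      simp
    · simp only [Function.comp_apply, Function.comp, Pi.add_apply, Pi.neg_apply]
      rw [← hyx]
      simp
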